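/- arXiv:1401.2373 — 4 statements merged into one kernel-verified Lean document; each statement's English description precedes it below -/
import Mathlib

section
/- Let D be a divisible abelian group and let A be a finite subgroup of D. Then D is isomorphic, as a group, to the quotient D/A. -/
open AddSubgroup

/-- Core lemma: quotient of a divisible group by a cyclic subgroup of prime order
is isomorphic to the group itself. -/
lemma divisible_mod_prime_cyclic (D : Type*) [AddCommGroup D]
    (hdiv : ∀ n : ℕ, 0 < n → Function.Surjective (fun x : D => n • x))
    (p : ℕ) (hp : p.Prime) (a : D) (ha : addOrderOf a = p) :
    Nonempty (D ⧸ AddSubgroup.zmultiples a ≃+ D) := by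
  classical
  have hdivp : ∀ y : D, ∃ z : D, p • z = y := fun y => hdiv p hp.pos y
  -- the chain x 0 = a, p • x (k+1) = x k
  let x : ℕ → D := fun k => Nat.rec a (fun _ prev => Classical.choose (hdivp prev)) k
  have hx0 : x 0 = a := rfl
  have hxs : ∀ k, p • x (k + 1) = x k := fun k => Classical.choose_spec (hdivp (x k))
  have hpow : ∀ j k, p ^ j • x (k + j) = x k := by
    intro j
    induction j with
    | zero => intro k; simp
    | succ j ih =>
      intro k
      have h1 : p ^ (j + 1) • x (k + (j + 1)) = p ^ j • (p • x ((k + j) + 1)) := by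
        rw [← mul_smul, ← pow_succ]
        rfl
      rw [h1, hxs (k + j)]
      exact ih k
  -- orders
  have hord : ∀ k, addOrderOf (x k) = p ^ (k + 1) := by
    intro k
    induction k with
    | zero => simpa [hx0] using ha
    | succ k ih =>
      have h1 : addOrderOf (p • x (k + 1)) = p ^ (k + 1) := by rw [hxs]; exact ih
      have h2 : addOrderOf (x (k + 1)) ∣ p ^ (k + 2) := by
        apply addOrderOf_dvd_of_nsmul_eq_zero
        have h3 : p ^ (k + 2) • x (k + 1) = p ^ (k + 1) • (p • x (k + 1)) := by
          rw [← mul_smul, ← pow_succ]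
        rw [h3, hxs, ← ih]
        exact addOrderOf_nsmul_eq_zero (x k)
      obtain ⟨j, hj, hjn⟩ := (Nat.dvd_prime_pow hp).mp h2
      have h3 : addOrderOf (p • x (k + 1)) =
          addOrderOf (x (k + 1)) / Nat.gcd (addOrderOf (x (k + 1))) p :=
        addOrderOf_nsmul' _ hp.ne_zero
      rw [h1, hjn] at h3
      rcases Nat.eq_zero_or_pos j with hj0 | hjpos
      · exfalso
        rw [hj0] at h3
        simp at h3
        have := hp.one_lt
        have := Nat.one_lt_pow (n := k + 1) (by omega) this
        omega
      · have hgcd : Nat.gcd (p ^ j) p = p := Nat.gcd_eq_right (dvd_pow_self p hjpos.ne')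
        rw [hgcd] at h3
        have hje : j = k + 2 := by
          have h4 : p ^ (k + 1) * p = p ^ j := by
            rw [h3, Nat.div_mul_cancel (dvd_pow_self p hjpos.ne')]
          rw [← pow_succ] at h4
          exact (Nat.pow_right_injective hp.two_le h4).symm
        rw [hjn, hje]
  -- the Prüfer-like subgroup E
  let zm : ℕ → AddSubgroup D := fun k => zmultiples (x k)
  have hzm_mono : Monotone zm := by
    apply monotone_nat_of_le_succ
    intro k
    rw [zmultiples_le]
    refine ⟨(p : ℤ), ?_⟩
    have := hxs k
    simpa using this
  let E : AddSubgroup D := ⨆ k, zm k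
  have hmemE : ∀ y : D, y ∈ E ↔ ∃ k, y ∈ zm k := fun y =>
    AddSubgroup.mem_iSup_of_directed hzm_mono.directed_le
  have hxmem : ∀ k, x k ∈ E := fun k => (hmemE _).mpr ⟨k, mem_zmultiples _⟩
  have haE : a ∈ E := hx0 ▸ hxmem 0
  -- E is divisible
  have hEdiv : ∀ n : ℕ, n ≠ 0 → ∀ y ∈ E, ∃ z ∈ E, n • z = y := by
    intro n hn y hy
    obtain ⟨k, hk⟩ := (hmemE y).mp hy
    obtain ⟨m, hm⟩ := mem_zmultiples_iff.mp hk
    suffices h : ∃ z ∈ E, n • z = x k by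
      obtain ⟨z, hz, hzn⟩ := h
      refine ⟨m • z, zsmul_mem hz m, ?_⟩
      rw [smul_comm, hzn, hm]
    set j := n.factorization p with hj
    set u := n / p ^ j with hu
    have hnu : n = p ^ j * u := (Nat.ordProj_mul_ordCompl_eq_self n p).symm
    have hup : ¬ p ∣ u := Nat.not_dvd_ordCompl hp hn
    have hucop : Nat.Coprime u (p ^ (k + j + 1)) :=
      ((Nat.Prime.coprime_iff_not_dvd hp).mpr hup).symm.pow_right _
    obtain ⟨c, -, hc⟩ := Nat.exists_mul_mod_eq_one_of_coprime hucop
      (Nat.one_lt_pow (by omega) hp.one_lt)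
    refine ⟨c • x (k + j), nsmul_mem (hxmem _) c, ?_⟩
    calc n • c • x (k + j) = (p ^ j * (u * c)) • x (k + j) := by
          rw [smul_smul, hnu, mul_assoc]
      _ = p ^ j • ((u * c) • x (k + j)) := mul_smul _ _ _
      _ = p ^ j • ((u * c % addOrderOf (x (k + j))) • x (k + j)) := by
          rw [mod_addOrderOf_nsmul]
      _ = p ^ j • x (k + j) := by rw [hord (k + j), hc, one_nsmul]
      _ = x k := hpow j k
  -- p-torsion of E is contained in zmultiples a
  have htors : ∀ d ∈ E, p • d = 0 → d ∈ zmultiples a := by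
    intro d hd hpd
    obtain ⟨k, hk⟩ := (hmemE d).mp hd
    obtain ⟨m, hm⟩ := mem_zmultiples_iff.mp hk
    have h0 : ((p : ℤ) * m) • x k = 0 := by
      rw [mul_smul]
      rw [← hm] at hpd
      simpa using hpd
    have hdvd : ((p : ℤ) ^ (k + 1)) ∣ (p : ℤ) * m := by
      have h1 := addOrderOf_dvd_iff_zsmul_eq_zero.mpr h0
      rw [hord k] at h1
      exact_mod_cast h1
    have hdm : ((p : ℤ) ^ k) ∣ m := by
      have hp0 : (p : ℤ) ≠ 0 := by exact_mod_cast hp.ne_zero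
      rw [pow_succ'] at hdvd
      exact (mul_dvd_mul_iff_left hp0).mp hdvd
    obtain ⟨m', rfl⟩ := hdm
    rw [mem_zmultiples_iff]
    refine ⟨m', ?_⟩
    rw [← hm, mul_comm, mul_smul]
    congr 1
    have h2 : (p : ℤ) ^ k • x k = (p ^ k : ℕ) • x k := by
      rw [← Nat.cast_pow, natCast_zsmul]
    rw [h2]
    have := hpow k 0
    rw [Nat.zero_add] at this
    rw [this, hx0]
  -- E is a divisible group, hence injective, so we get a retraction r : D → E
  letI : DivisibleBy ↥E ℕ := by
    refine divisibleByOfSMulRightSurj _ _ ?_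
    rintro n hn ⟨y, hy⟩
    obtain ⟨z, hz, hzn⟩ := hEdiv n hn y hy
    exact ⟨⟨z, hz⟩, Subtype.ext (by simpa using hzn)⟩
  letI : DivisibleBy ↥E ℤ := AddGroup.divisibleByIntOfDivisibleByNat ↥E
  haveI hinj : Module.Injective ℤ ↥E := (Module.Baer.of_divisible ↥E).injective
  obtain ⟨r, hr⟩ := Module.Injective.out (E.subtype.toIntLinearMap)
    Subtype.coe_injective (LinearMap.id : ↥E →ₗ[ℤ] ↥E)
  have hrE : ∀ (z : D) (hz : z ∈ E), r z = ⟨z, hz⟩ := fun z hz => hr ⟨z, hz⟩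
  -- the endomorphism Ψ : multiply the E-component by p
  let Ψ : D →+ D := AddMonoidHom.mk' (fun d => d - ((r d : ↥E) : D) + p • ((r d : ↥E) : D))
    (by
      intro d₁ d₂
      simp only [map_add, AddSubgroup.coe_add, smul_add]
      abel)
  have hΨ : ∀ d : D, Ψ d = d - ((r d : ↥E) : D) + p • ((r d : ↥E) : D) := fun d => rfl
  have hsurj : Function.Surjective Ψ := by
    intro y
    obtain ⟨z, hz, hzp⟩ := hEdiv p hp.ne_zero ((r y : ↥E) : D) (r y).2
    refine ⟨y - ((r y : ↥E) : D) + z, ?_⟩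
    have h1 : r (y - ((r y : ↥E) : D) + z) = ⟨z, hz⟩ := by
      rw [map_add, map_sub, hrE z hz, hrE _ (r y).2]
      simp
    rw [hΨ, h1]
    show y - ((r y : ↥E) : D) + z - z + p • z = y
    rw [hzp]
    abel
  have hker : Ψ.ker = zmultiples a := by
    ext d
    simp only [AddMonoidHom.mem_ker]
    constructor
    · intro hd
      rw [hΨ] at hd
      have hdE : d ∈ E := by
        have h2 : d = ((r d : ↥E) : D) - p • ((r d : ↥E) : D) := by
          apply eq_of_sub_eq_zero
          calc d - (((r d : ↥E) : D) - p • ((r d : ↥E) : D))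
              = d - ((r d : ↥E) : D) + p • ((r d : ↥E) : D) := by abel
            _ = 0 := hd
        rw [h2]
        exact sub_mem (r d).2 (nsmul_mem (r d).2 p)
      have hrd : r d = ⟨d, hdE⟩ := hrE d hdE
      have hpd : p • d = 0 := by
        rw [hrd] at hd
        simpa using hd
      exact htors d hdE hpd
    · intro hd
      obtain ⟨m, hm⟩ := mem_zmultiples_iff.mp hd
      have hdE : d ∈ E := by rw [← hm]; exact zsmul_mem haE m
      have hrd : r d = ⟨d, hdE⟩ := hrE d hdE
      rw [hΨ, hrd]
      have hpd : p • d = 0 := by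
        rw [← hm, smul_comm, ← ha, addOrderOf_nsmul_eq_zero, smul_zero]
      simp [hpd]
  exact ⟨hker ▸ QuotientAddGroup.quotientKerEquivOfSurjective Ψ hsurj⟩

/-- If `D` is a divisible abelian group and `A` is a finite subgroup of `D`,
then `D` is isomorphic (as a group) to the quotient `D ⧸ A`. -/
theorem divisible_quotient_finite_iso
    (D : Type*) [AddCommGroup D]
    (hdiv : ∀ n : ℕ, 0 < n → Function.Surjective (fun x : D => n • x))
    (A : AddSubgroup D) (hA : Finite A) :
    Nonempty (D ≃+ D ⧸ A) := by
  classical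
  have key : ∀ n : ℕ, ∀ A : AddSubgroup D, Finite ↥A → Nat.card ↥A ≤ n →
      Nonempty (D ≃+ D ⧸ A) := by
    intro n
    induction n with
    | zero =>
      intro A hA hle
      haveI := hA
      have : 0 < Nat.card ↥A := Nat.card_pos
      omega
    | succ n ih =>
      intro A hA hle
      haveI := hA
      by_cases hbot : A = ⊥
      · subst hbot
        exact ⟨(QuotientAddGroup.quotientBot : D ⧸ (⊥ : AddSubgroup D) ≃+ D).symm⟩
      · have hcard1 : Nat.card ↥A ≠ 1 := fun h => hbot (AddSubgroup.card_eq_one.mp h)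
        obtain ⟨p, hp, hpdvd⟩ := Nat.exists_prime_and_dvd hcard1
        haveI : Fact p.Prime := ⟨hp⟩
        letI := Fintype.ofFinite ↥A
        obtain ⟨g, hg⟩ := exists_prime_addOrderOf_dvd_card (G := ↥A) p
          (by rwa [← Nat.card_eq_fintype_card])
        have hga : addOrderOf (g : D) = p := by
          rw [← hg]
          exact addOrderOf_injective A.subtype Subtype.coe_injective g
        obtain ⟨e⟩ := divisible_mod_prime_cyclic D hdiv p hp (g : D) hga
        set A₀ := zmultiples (g : D) with hA₀
        have hA₀A : A₀ ≤ A := by rw [zmultiples_le]; exact g.2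
        set f : ↥A →+ D ⧸ A₀ := (QuotientAddGroup.mk' A₀).comp A.subtype with hf
        set A' : AddSubgroup (D ⧸ A₀) := A.map (QuotientAddGroup.mk' A₀) with hA'
        have hrange : f.range = A' := by
          rw [hf, AddMonoidHom.range_comp, AddSubgroup.range_subtype]
        have hcard_eq : Nat.card ↥A = Nat.card ↥A' * Nat.card ↥f.ker := by
          rw [AddSubgroup.card_eq_card_quotient_mul_card_addSubgroup f.ker]
          congr 1
          rw [← hrange]
          exact Nat.card_congr (QuotientAddGroup.quotientKerEquivRange f).toEquiv
        have hane : (g : D) ≠ 0 := by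
          intro h
          rw [h, addOrderOf_zero] at hga
          exact hp.one_lt.ne' hga.symm
        have hmem : (g : ↥A) ∈ f.ker := by
          rw [AddMonoidHom.mem_ker, hf]
          simp only [AddMonoidHom.coe_comp, Function.comp_apply, AddSubgroup.coe_subtype,
            QuotientAddGroup.mk'_apply]
          rw [QuotientAddGroup.eq_zero_iff]
          exact mem_zmultiples _
        have hker2 : 2 ≤ Nat.card ↥f.ker := by
          haveI : Finite ↥f.ker := Subtype.finite
          rw [Nat.succ_le_iff, Finite.one_lt_card_iff_nontrivial]
          exact ⟨⟨⟨g, hmem⟩, 0, fun h => hane (by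
            have := congrArg (fun z : ↥f.ker => ((z : ↥A) : D)) h
            simpa using this)⟩⟩
        have hApos : 0 < Nat.card ↥A := Nat.card_pos
        have hA'pos : 0 < Nat.card ↥A' := by
          rcases Nat.eq_zero_or_pos (Nat.card ↥A') with h | h
          · rw [h] at hcard_eq; omega
          · exact h
        have hA'lt : Nat.card ↥A' < Nat.card ↥A := by
          calc Nat.card ↥A' < Nat.card ↥A' * 2 := by omega
            _ ≤ Nat.card ↥A' * Nat.card ↥f.ker := Nat.mul_le_mul_left _ hker2
            _ = Nat.card ↥A := hcard_eq.symm
        set B : AddSubgroup D := A'.map e.toAddMonoidHom with hB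
        have hcardB : Nat.card ↥B = Nat.card ↥A' :=
          (Nat.card_congr (AddSubgroup.equivMapOfInjective A' e.toAddMonoidHom
            e.injective).toEquiv).symm
        have hfinB : Finite ↥B := Nat.finite_of_card_ne_zero (by omega)
        obtain ⟨e2⟩ := ih B hfinB (by omega)
        have e3 : (D ⧸ A₀) ⧸ A' ≃+ D ⧸ B := QuotientAddGroup.congr A' B e rfl
        have e4 : (D ⧸ A₀) ⧸ A' ≃+ D ⧸ A :=
          QuotientAddGroup.quotientQuotientEquivQuotient A₀ A hA₀A
        exact ⟨(e2.trans e3.symm).trans e4⟩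
  exact key (Nat.card ↥A) A hA le_rfl
end

section
/- Let G be a divisible abelian group, N a finite subgroup of G, and K a field. If the quotient G/N is isomorphic as a group to the multiplicative group Kˣ of units of K, then G itself is isomorphic as a group to Kˣ. -/
/-- If `G` is a divisible abelian group, `N` a finite subgroup, `K` a field,
and `G ⧸ N` is isomorphic as a group to `Kˣ`, then `G ≅ Kˣ`. -/
theorem divisible_quotient_units_iso
    (G : Type*) [CommGroup G]
    (hdiv : ∀ n : ℕ, 0 < n → Function.Surjective (fun x : G => x ^ n))
    (N : Subgroup G) (hN : Finite N)
    (K : Type*) [Field K]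
    (e : (G ⧸ N) ≃* Kˣ) :
    Nonempty (G ≃* Kˣ) := by
  classical
  set n := Nat.card N with hn
  have hnpos : 0 < n := Nat.card_pos
  set φ : G →* G := powMonoidHom n with hφ
  have hsurj : Function.Surjective φ := hdiv n hnpos
  have hNker : N ≤ φ.ker := by
    intro x hx
    have : (⟨x, hx⟩ : N) ^ n = 1 := pow_card_eq_one'
    have : x ^ n = 1 := by
      simpa using congrArg (Subtype.val) this
    simpa [φ, MonoidHom.mem_ker, powMonoidHom_apply] using this
  -- G ≅ (G/N)/(ker/N)
  have e1 : G ⧸ φ.ker ≃* G := QuotientGroup.quotientKerEquivOfSurjective φ hsurj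
  have e2 : (G ⧸ N) ⧸ (φ.ker.map (QuotientGroup.mk' N)) ≃* G ⧸ φ.ker :=
    QuotientGroup.quotientQuotientEquivQuotient N φ.ker hNker
  set M := φ.ker.map (QuotientGroup.mk' N) with hM
  set T := M.map e.toMonoidHom with hT
  have e3 : (G ⧸ N) ⧸ M ≃* Kˣ ⧸ T := QuotientGroup.congr M T e rfl
  have eGT : G ≃* Kˣ ⧸ T := (e1.symm.trans e2.symm).trans e3
  -- T consists of n-th roots of unity, hence is finite
  have hTroot : T ≤ rootsOfUnity n K := by
    rintro t ht
    obtain ⟨y, hy, rfl⟩ := ht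
    obtain ⟨x, hx, rfl⟩ := hy
    rw [mem_rootsOfUnity]
    have hx1 : x ^ n = 1 := by simpa [φ, powMonoidHom_apply] using hx
    rw [← map_pow, ← map_pow, hx1, map_one, map_one]
  haveI : NeZero n := ⟨hnpos.ne'⟩
  have hTfin : Finite T :=
    Finite.of_injective (Subgroup.inclusion hTroot) (Subgroup.inclusion_injective hTroot)
  set d := Nat.card T with hd
  have hdpos : 0 < d := Nat.card_pos
  -- Kˣ is divisible
  have hKdiv : ∀ m : ℕ, 0 < m → Function.Surjective (fun u : Kˣ => u ^ m) := by
    intro m hm u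
    obtain ⟨x, hx⟩ := QuotientGroup.mk'_surjective N (e.symm u)
    obtain ⟨x0, hx0⟩ := hdiv m hm x
    refine ⟨e (QuotientGroup.mk' N x0), ?_⟩
    have : (QuotientGroup.mk' N x0) ^ m = e.symm u := by
      rw [← map_pow]
      simp only at hx0
      rw [hx0, hx]
    simp only [← map_pow, this, MulEquiv.apply_symm_apply]
  haveI : NeZero d := ⟨hdpos.ne'⟩
  set ψ : Kˣ →* Kˣ := powMonoidHom d with hψ
  have hψsurj : Function.Surjective ψ := hKdiv d hdpos
  -- ker ψ = rootsOfUnity d K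
  have hker : ψ.ker = rootsOfUnity d K := by
    ext t
    simp [ψ, MonoidHom.mem_ker, powMonoidHom_apply, mem_rootsOfUnity]
  have hTψ : T ≤ ψ.ker := by
    intro t ht
    have : (⟨t, ht⟩ : T) ^ d = 1 := pow_card_eq_one'
    have ht1 : t ^ d = 1 := by simpa using congrArg (Subtype.val) this
    simpa [ψ, MonoidHom.mem_ker, powMonoidHom_apply] using ht1
  have hkerfin : Finite ψ.ker := by rw [hker]; infer_instance
  have hcard : Nat.card ψ.ker ≤ Nat.card T := by
    have h1 : Nat.card ψ.ker = Nat.card (rootsOfUnity d K) := by rw [hker]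
    have h2 : Nat.card (rootsOfUnity d K) ≤ d := by
      exact card_rootsOfUnity K d
    omega
  have hTeq : T = ψ.ker := Subgroup.eq_of_le_of_card_ge hTψ hcard
  have e4 : Kˣ ⧸ ψ.ker ≃* Kˣ := QuotientGroup.quotientKerEquivOfSurjective ψ hψsurj
  exact ⟨eGT.trans ((QuotientGroup.quotientMulEquivOfEq hTeq).trans e4)⟩
end

section
/- Let G be a group acting faithfully, transitively, and primitively on a set X, and let x, y ∈ X be distinct points. Then the intersection of the center of the stabilizer of x with the center of the stabilizer of y is trivial: any g ∈ G that centralizes the stabilizer of x and lies in it, and also centralizes the stabilizer of y and lies in it, must equal the identity. -/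
/-- A transitive action is primitive if every `G`-invariant equivalence relation on `X`
is either trivial (all classes singletons) or universal (one class). -/
def IsPrimitiveAction (G X : Type*) [Group G] [MulAction G X] : Prop :=
  ∀ r : Setoid X, (∀ (g : G) (a b : X), r a b → r (g • a) (g • b)) →
    (∀ a b : X, r a b → a = b) ∨ (∀ a b : X, r a b)

/-- Key dichotomy: if `g` lies in and centralizes the stabilizer of `x`, then either the
centralizer of `g` is contained in the stabilizer of `x`, or `g` fixes every point. -/
theorem centralizer_le_stabilizer_or_fixes
    (G X : Type*) [Group G] [MulAction G X]
    (htrans : MulAction.IsPretransitive G X)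
    (hprim : IsPrimitiveAction G X)
    (x : X) (g : G)
    (hgx : g ∈ MulAction.stabilizer G x)
    (hgxc : ∀ h ∈ MulAction.stabilizer G x, g * h = h * g) :
    (∀ c : G, g * c = c * g → c ∈ MulAction.stabilizer G x) ∨ (∀ a : X, g • a = a) := by
  have hstab : ∀ h : G, h • x = x → Commute g h := by
    intro h hh
    exact hgxc h hh
  set r : Setoid X :=
    { r := fun a b => ∃ h k : G, h • x = a ∧ k • x = b ∧ Commute g (h⁻¹ * k)
      iseqv := by
        constructor
        · intro a
          obtain ⟨h, hh⟩ := htrans.exists_smul_eq x a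
          exact ⟨h, h, hh, hh, by simp⟩
        · rintro a b ⟨h, k, ha, hb, hc⟩
          exact ⟨k, h, hb, ha, by simpa [mul_inv_rev] using hc.inv_right⟩
        · rintro a b c ⟨h, k, ha, hb, hc⟩ ⟨h', k', hb', hc', hc2⟩
          refine ⟨h, k', ha, hc', ?_⟩
          have hmid : Commute g (k⁻¹ * h') := by
            have : (h'⁻¹ * k) • x = x := by
              rw [mul_smul, hb, ← hb', inv_smul_smul]
            simpa [mul_inv_rev] using (hstab _ this).inv_right
          have : h⁻¹ * k' = (h⁻¹ * k) * (k⁻¹ * h') * (h'⁻¹ * k') := by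
            group
          rw [this]
          exact (hc.mul_right hmid).mul_right hc2 } with hr
  have hinv : ∀ (t : G) (a b : X), r a b → r (t • a) (t • b) := by
    rintro t a b ⟨h, k, ha, hb, hc⟩
    refine ⟨t * h, t * k, by rw [mul_smul, ha], by rw [mul_smul, hb], ?_⟩
    have : (t * h)⁻¹ * (t * k) = h⁻¹ * k := by group
    rwa [this]
  rcases hprim r hinv with htriv | huniv
  · left
    intro c hc
    have : r x (c • x) := ⟨1, c, one_smul _ _, rfl, by rw [inv_one, one_mul]; exact hc⟩
    have := htriv _ _ this
    simpa [MulAction.mem_stabilizer_iff] using this.symm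
  · right
    intro a
    obtain ⟨h, k, hhx, hka, hc⟩ := huniv x a
    have hk : Commute g k := by
      have h1 : Commute g h := hstab h hhx
      have : k = h * (h⁻¹ * k) := by group
      rw [this]
      exact h1.mul_right hc
    calc g • a = g • (k • x) := by rw [hka]
      _ = k • (g • x) := by rw [← mul_smul, hk.eq, mul_smul]
      _ = k • x := by rw [hgx]
      _ = a := hka

/-- In a faithful, transitive, primitive action, the centers of the stabilizers of two
distinct points intersect trivially: any `g` lying in and centralizing both stabilizers
is the identity. -/
theorem center_stabilizers_inter_trivial_of_primitive
    (G X : Type*) [Group G] [MulAction G X]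
    (hfaithful : ∀ g : G, (∀ x : X, g • x = x) → g = 1)
    (htrans : MulAction.IsPretransitive G X)
    (hprim : IsPrimitiveAction G X)
    (x y : X) (hxy : x ≠ y)
    (g : G)
    (hgx : g ∈ MulAction.stabilizer G x)
    (hgxc : ∀ h ∈ MulAction.stabilizer G x, g * h = h * g)
    (hgy : g ∈ MulAction.stabilizer G y)
    (hgyc : ∀ h ∈ MulAction.stabilizer G y, g * h = h * g) :
    g = 1 := by
  rcases centralizer_le_stabilizer_or_fixes G X htrans hprim x g hgx hgxc with hCx | hfix
  swap
  · exact hfaithful g hfix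
  rcases centralizer_le_stabilizer_or_fixes G X htrans hprim y g hgy hgyc with hCy | hfix
  swap
  · exact hfaithful g hfix
  -- stabilizers of x and y coincide
  have hsteq : MulAction.stabilizer G x = MulAction.stabilizer G y := by
    ext h
    constructor
    · intro hh
      exact hCy h (hgxc h hh)
    · intro hh
      exact hCx h (hgyc h hh)
  -- the relation "equal stabilizers" is invariant
  set s : Setoid X :=
    { r := fun a b => MulAction.stabilizer G a = MulAction.stabilizer G b
      iseqv := ⟨fun _ => rfl, fun h => h.symm, fun h h' => h.trans h'⟩ } with hs
  have hinv : ∀ (t : G) (a b : X), s a b → s (t • a) (t • b) := by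
    intro t a b hab
    show MulAction.stabilizer G (t • a) = MulAction.stabilizer G (t • b)
    rw [MulAction.stabilizer_smul_eq_stabilizer_map_conj, hab,
      ← MulAction.stabilizer_smul_eq_stabilizer_map_conj]
  rcases hprim s hinv with htriv | huniv
  · exact absurd (htriv x y hsteq) hxy
  · refine hfaithful g fun a => ?_
    have : MulAction.stabilizer G x = MulAction.stabilizer G a := huniv x a
    have hga : g ∈ MulAction.stabilizer G a := this ▸ hgx
    exact hga
end

section
/- Let G be a group acting faithfully, transitively, and primitively on a set X, and suppose that every point stabilizer is abelian. Then for any two distinct points x, y ∈ X, the intersection of the stabilizer of x and the stabilizer of y is trivial; in other words, each point stabilizer G_x acts freely on X \ {x}. -/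
/-- Primitivity implies point stabilizers are maximal subgroups. -/
lemma stabilizer_maximal_of_primitive
    (G X : Type*) [Group G] [MulAction G X]
    (htrans : MulAction.IsPretransitive G X)
    (hprim : IsPrimitiveAction G X)
    (x : X) (H : Subgroup G) (hH : MulAction.stabilizer G x ≤ H) :
    H ≤ MulAction.stabilizer G x ∨ H = ⊤ := by
  set r : Setoid X :=
    { r := fun a b => ∃ g g' : G, g • x = a ∧ g' • x = b ∧ g⁻¹ * g' ∈ H
      iseqv := by
        constructor
        · intro a
          obtain ⟨g, hg⟩ := htrans.exists_smul_eq x a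
          exact ⟨g, g, hg, hg, by simpa using one_mem H⟩
        · rintro a b ⟨g, g', h1, h2, h3⟩
          exact ⟨g', g, h2, h1, by simpa using inv_mem h3⟩
        · rintro a b c ⟨g1, g2, h1, h2, h3⟩ ⟨g3, g4, h4, h5, h6⟩
          refine ⟨g1, g4, h1, h5, ?_⟩
          have hmid : g2⁻¹ * g3 ∈ MulAction.stabilizer G x := by
            rw [MulAction.mem_stabilizer_iff, mul_smul, h4, ← h2, inv_smul_smul]
          have : g1⁻¹ * g4 = (g1⁻¹ * g2) * (g2⁻¹ * g3) * (g3⁻¹ * g4) := by group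
          rw [this]
          exact mul_mem (mul_mem h3 (hH hmid)) h6 } with hr
  have hinv : ∀ (g : G) (a b : X), r a b → r (g • a) (g • b) := by
    rintro g a b ⟨g1, g2, h1, h2, h3⟩
    refine ⟨g * g1, g * g2, by rw [mul_smul, h1], by rw [mul_smul, h2], ?_⟩
    have : (g * g1)⁻¹ * (g * g2) = g1⁻¹ * g2 := by group
    rw [this]; exact h3
  rcases hprim r hinv with hsing | huniv
  · left
    intro h hh
    have : r x (h • x) := ⟨1, h, one_smul _ _, rfl, by simpa using hh⟩
    have := hsing _ _ this
    rw [MulAction.mem_stabilizer_iff, ← this]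
  · right
    rw [Subgroup.eq_top_iff']
    intro g
    obtain ⟨g1, g2, h1, h2, h3⟩ := huniv x (g • x)
    have hg1 : g1 ∈ H := hH h1
    have hg2 : g2 ∈ H := by
      have := mul_mem hg1 h3
      simpa using this
    have hlast : g2⁻¹ * g ∈ MulAction.stabilizer G x := by
      rw [MulAction.mem_stabilizer_iff, mul_smul, ← h2, inv_smul_smul]
    have : g = g2 * (g2⁻¹ * g) := by group
    rw [this]
    exact mul_mem hg2 (hH hlast)

/-- In a faithful, transitive, primitive action with abelian point stabilizers,
the stabilizers of two distinct points intersect trivially, i.e. each point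
stabilizer acts freely off its fixed point. -/
theorem stabilizers_inter_trivial_of_primitive_abelian
    (G X : Type*) [Group G] [MulAction G X]
    (hfaithful : ∀ g : G, (∀ x : X, g • x = x) → g = 1)
    (htrans : MulAction.IsPretransitive G X)
    (hprim : IsPrimitiveAction G X)
    (hab : ∀ z : X, ∀ g ∈ MulAction.stabilizer G z, ∀ h ∈ MulAction.stabilizer G z,
      g * h = h * g)
    (x y : X) (hxy : x ≠ y) :
    MulAction.stabilizer G x ⊓ MulAction.stabilizer G y = ⊥ := by
  set U := MulAction.stabilizer G x ⊓ MulAction.stabilizer G y with hU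
  rw [Subgroup.eq_bot_iff_forall]
  by_cases heq : MulAction.stabilizer G x = MulAction.stabilizer G y
  · -- stabilizers equal: use the relation "same stabilizer"
    set r : Setoid X :=
      { r := fun a b => MulAction.stabilizer G a = MulAction.stabilizer G b
        iseqv := ⟨fun _ => rfl, Eq.symm, Eq.trans⟩ } with hr
    have hinv : ∀ (g : G) (a b : X), r a b → r (g • a) (g • b) := by
      intro g a b hab'
      show MulAction.stabilizer G (g • a) = MulAction.stabilizer G (g • b)
      rw [MulAction.stabilizer_smul_eq_stabilizer_map_conj,
        MulAction.stabilizer_smul_eq_stabilizer_map_conj]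
      exact congrArg _ hab'
    rcases hprim r hinv with hsing | huniv
    · exact absurd (hsing x y heq) hxy
    · intro u hu
      apply hfaithful
      intro z
      have hz : MulAction.stabilizer G x = MulAction.stabilizer G z := huniv x z
      have : u ∈ MulAction.stabilizer G z := hz ▸ hu.1
      exact this
  · -- stabilizers distinct: normalizer of U is all of G, so U is normal, hence trivial
    have key : ∀ z : X, ∀ g ∈ MulAction.stabilizer G z, U ≤ MulAction.stabilizer G z →
        g ∈ (Subgroup.normalizer (U : Set G)) := by
      intro z g hg hUz
      have comm : ∀ u ∈ U, g * u * g⁻¹ = u := by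
        intro u hu
        have := hab z g hg u (hUz hu)
        rw [this]; group
      rw [Subgroup.mem_normalizer_iff]
      intro h
      constructor
      · intro hh; rw [comm h hh]; exact hh
      · intro hh
        have h1 : g * (g * h * g⁻¹) * g⁻¹ = g * h * g⁻¹ := comm _ hh
        have h2 : h = g * h * g⁻¹ := by
          calc h = g⁻¹ * (g * h * g⁻¹) * g := by group
            _ = g⁻¹ * (g * (g * h * g⁻¹) * g⁻¹) * g := by rw [comm _ hh]
            _ = g * h * g⁻¹ := by group
        rw [h2]; exact hh
    have hxN : MulAction.stabilizer G x ≤ (Subgroup.normalizer (U : Set G)) := fun g hg =>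
      key x g hg inf_le_left
    have hyN : MulAction.stabilizer G y ≤ (Subgroup.normalizer (U : Set G)) := fun g hg =>
      key y g hg inf_le_right
    have hNtop : (Subgroup.normalizer (U : Set G)) = ⊤ := by
      rcases stabilizer_maximal_of_primitive G X htrans hprim x (Subgroup.normalizer (U : Set G)) hxN with h | h
      · rcases stabilizer_maximal_of_primitive G X htrans hprim y (Subgroup.normalizer (U : Set G)) hyN with
          h' | h'
        · exact absurd (le_antisymm (le_trans hxN h') (le_trans hyN h)) heq
        · exact h'
      · exact h
    have hnormal : U.Normal := Subgroup.normalizer_eq_top_iff.mp hNtop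
    intro u hu
    apply hfaithful
    intro z
    obtain ⟨g, hg⟩ := htrans.exists_smul_eq x z
    have h1 : g⁻¹ * u * g ∈ U := by
      simpa using hnormal.conj_mem u hu g⁻¹
    have h2 : (g⁻¹ * u * g) • x = x := h1.1
    calc u • z = u • (g • x) := by rw [hg]
      _ = g • ((g⁻¹ * u * g) • x) := by
          rw [mul_smul, mul_smul, smul_inv_smul]
      _ = g • x := by rw [h2]
      _ = z := hg
end
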